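/- Any randomized one-way streaming algorithm solving dictionary matching with k mismatches on a dictionary of d patterns correctly with probability > 2/3 must use Ω(kd) bits of memory, given that the one-way randomized communication complexity of Index on n-bit strings is Ω(n). -/

import Mathlib

open scoped Classical

/-- A deterministic streaming algorithm for dictionary matching with `d`
patterns using `b` bits of memory: it preprocesses the dictionary into a memory
state, updates the state on each arriving text character, and reports from the
state the set of patterns with a `k`-mismatch occurrence ending at the current
position. Characters are natural numbers. -/
structure DetAlg (d b : ℕ) where
  init : (Fin d → List ℕ) → Fin (2 ^ b)
  step : Fin (2 ^ b) → ℕ → Fin (2 ^ b)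
  out : Fin (2 ^ b) → Finset (Fin d)

/-- Number of mismatches between two equal-length lists. -/
def listHD (X Y : List ℕ) : ℕ :=
  (List.zipWith (fun a b => if a = b then (0 : ℕ) else 1) X Y).sum

/-- `P` has a `kk`-mismatch occurrence ending at the last position of `T`. -/
def occursEnd (kk : ℕ) (P T : List ℕ) : Prop :=
  P.length ≤ T.length ∧ listHD P (T.drop (T.length - P.length)) ≤ kk

/-- The memory state after processing text `T` on dictionary `D`. -/
def runAlg {d b : ℕ} (A : DetAlg d b) (D : Fin d → List ℕ) (T : List ℕ) : Fin (2 ^ b) :=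
  T.foldl A.step (A.init D)

/-- A randomized streaming algorithm (a family of deterministic algorithms
indexed by a finite seed set `R`, seed chosen uniformly) is correct if for every
dictionary and every text, with probability `> 2/3` it reports exactly the set
of patterns with a `kk`-mismatch occurrence ending at the current position. -/
def StreamCorrect (kk d b : ℕ) (R : Type) [Fintype R] (A : R → DetAlg d b) : Prop :=
  ∀ D : Fin d → List ℕ, ∀ T : List ℕ,
    (2 : ℝ) / 3 <
      ((Finset.univ.filter (fun ρ : R =>
          (A ρ).out (runAlg (A ρ) D T) =
            Finset.univ.filter (fun jj => occursEnd kk (D jj) T))).card : ℝ) /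
        (Fintype.card R : ℝ)

/-- The Ω(n) one-way randomized communication lower bound for Index
(Kremer–Nisan–Ron): any one-way protocol (Alice sends a `b`-bit message
depending on her input `x ∈ {0,1}ⁿ` and the shared randomness; Bob must output
`x_i` correctly with probability `> 2/3`) requires `b = Ω(n)`. -/
def IndexLB : Prop :=
  ∃ c : ℝ, 0 < c ∧
    ∀ (n b : ℕ) (R : Type) [Fintype R] [Nonempty R]
      (msg : (Fin n → Bool) → R → Fin (2 ^ b)) (bob : Fin n → Fin (2 ^ b) → R → Bool),
      (∀ (x : Fin n → Bool) (i : Fin n),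
        (2 : ℝ) / 3 <
          ((Finset.univ.filter (fun ρ : R => bob i (msg x ρ) ρ = x i)).card : ℝ) /
            (Fintype.card R : ℝ)) →
      c * (n : ℝ) ≤ (b : ℝ)

/-! ### Auxiliary lemmas -/

lemma listHD_cons (a b : ℕ) (X Y : List ℕ) :
    listHD (a :: X) (b :: Y) = (if a = b then 0 else 1) + listHD X Y := by
  simp [listHD]

lemma listHD_append (a b c e : List ℕ) (h : a.length = c.length) :
    listHD (a ++ b) (c ++ e) = listHD a c + listHD b e := by
  simp [listHD, List.zipWith_append h]

lemma listHD_replicate (n u v : ℕ) :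
    listHD (List.replicate n u) (List.replicate n v) = if u = v then 0 else n := by
  induction n with
  | zero => simp [listHD]
  | succ m ih =>
    rw [List.replicate_succ, List.replicate_succ, listHD_cons, ih]
    by_cases h : u = v <;> simp [h, Nat.add_comm]

lemma listHD_ofFn {n : ℕ} (f g : Fin n → ℕ) :
    listHD (List.ofFn f) (List.ofFn g) = ∑ i, if f i = g i then 0 else 1 := by
  induction n with
  | zero => simp [listHD]
  | succ m ih =>
    rw [List.ofFn_succ, List.ofFn_succ, listHD_cons, ih, Fin.sum_univ_succ]

lemma keyBound {kk d : ℕ} (j' : Fin d) (m : Fin kk) :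
    (j' : ℕ) * kk + (m : ℕ) < kk * d := by
  have h1 : (j' : ℕ) * kk + (m : ℕ) < ((j' : ℕ) + 1) * kk := by
    rw [Nat.add_mul, Nat.one_mul]; exact Nat.add_lt_add_left m.isLt _
  exact h1.trans_le (by rw [Nat.mul_comm kk d]; exact Nat.mul_le_mul_right kk j'.isLt)

/-- Alice's `j`-th pattern: `kk+1` sentinels `4+j`, separator `2`, then the
`j`-th block of bits of `x`. -/
def encPat {kk d : ℕ} (x : Fin (kk * d) → Bool) (j : Fin d) : List ℕ :=
  List.replicate (kk + 1) (4 + (j : ℕ)) ++ 2 ::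
    List.ofFn (fun m : Fin kk =>
      if x ⟨(j : ℕ) * kk + (m : ℕ), keyBound j m⟩ then 1 else 0)

/-- Bob's text for index `i` with block `j = i / kk`, offset `l = i % kk`. -/
def encText (kk : ℕ) (j l : ℕ) : List ℕ :=
  List.replicate (kk + 1) (4 + j) ++ 3 ::
    List.ofFn (fun m : Fin kk => if (m : ℕ) = l then 1 else 3)

lemma encPat_length {kk d : ℕ} (x : Fin (kk * d) → Bool) (j : Fin d) :
    (encPat x j).length = 2 * kk + 2 := by
  simp [encPat]; omega

lemma encText_length (kk j l : ℕ) : (encText kk j l).length = 2 * kk + 2 := by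
  simp [encText]; omega

lemma key {kk d : ℕ} (hkk : 1 ≤ kk) (x : Fin (kk * d) → Bool) (i : Fin (kk * d))
    (j' : Fin d) :
    occursEnd kk (encPat x j') (encText kk ((i : ℕ) / kk) ((i : ℕ) % kk)) ↔
      ((j' : ℕ) = (i : ℕ) / kk ∧ x i = true) := by
  have hlen : (encPat x j').length = (encText kk ((i : ℕ) / kk) ((i : ℕ) % kk)).length := by
    rw [encPat_length, encText_length]
  have h0 : (encText kk ((i : ℕ) / kk) ((i : ℕ) % kk)).length - (encPat x j').length = 0 := by
    rw [encPat_length, encText_length]; omega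
  have hl : (i : ℕ) % kk < kk := Nat.mod_lt _ hkk
  set lF : Fin kk := ⟨(i : ℕ) % kk, hl⟩ with hlF
  set a : ℕ := if x ⟨(j' : ℕ) * kk + ((i : ℕ) % kk), keyBound j' lF⟩ then 0 else 1 with ha
  have hsum : (∑ m : Fin kk, (if (m : ℕ) = (i : ℕ) % kk then
      (if x ⟨(j' : ℕ) * kk + (m : ℕ), keyBound j' m⟩ then 0 else 1) else 1)) =
      kk - 1 + a := by
    rw [← Finset.sum_erase_add Finset.univ _ (Finset.mem_univ lF)]
    have h1 : ∀ m ∈ Finset.univ.erase lF,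
        (if (m : ℕ) = (i : ℕ) % kk then
          (if x ⟨(j' : ℕ) * kk + (m : ℕ), keyBound j' m⟩ then 0 else 1) else 1) = 1 := by
      intro m hm
      have : (m : ℕ) ≠ (i : ℕ) % kk := fun h => (Finset.ne_of_mem_erase hm) (Fin.ext h)
      simp [this]
    rw [Finset.sum_congr rfl h1, Finset.sum_const, Nat.smul_one_eq_cast]
    have h2 : ((if ((lF : ℕ)) = (i : ℕ) % kk then
        (if x ⟨(j' : ℕ) * kk + ((lF : ℕ)), keyBound j' lF⟩ then 0 else 1) else 1) : ℕ) = a := by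
      simp [hlF, ha]
    rw [h2]
    simp [Finset.card_erase_of_mem, Nat.cast_id]
  have hHD : listHD (encPat x j') (encText kk ((i : ℕ) / kk) ((i : ℕ) % kk)) =
      (if (4 + (j' : ℕ)) = (4 + (i : ℕ) / kk) then 0 else kk + 1) + 1 + (kk - 1 + a) := by
    rw [encPat, encText, listHD_append _ _ _ _ (by simp), listHD_cons,
      listHD_replicate, listHD_ofFn]
    rw [show ((if (2 : ℕ) = 3 then 0 else 1) : ℕ) = 1 by norm_num]
    rw [show (∑ m : Fin kk, (if (if x ⟨(j' : ℕ) * kk + (m : ℕ), keyBound j' m⟩ then 1 else 0) =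
        (if (m : ℕ) = (i : ℕ) % kk then 1 else 3) then (0:ℕ) else 1)) =
        ∑ m : Fin kk, (if (m : ℕ) = (i : ℕ) % kk then
          (if x ⟨(j' : ℕ) * kk + (m : ℕ), keyBound j' m⟩ then 0 else 1) else 1) from
      Finset.sum_congr rfl (fun m _ => by
        by_cases hm : (m : ℕ) = (i : ℕ) % kk <;>
          by_cases hx : x ⟨(j' : ℕ) * kk + (m : ℕ), keyBound j' m⟩ <;> simp [hm, hx])]
    rw [hsum]
    ring
  have hidx : (⟨((i : ℕ) / kk) * kk + ((i : ℕ) % kk), keyBound ⟨(i:ℕ)/kk, Nat.div_lt_of_lt_mul i.isLt⟩ lF⟩ : Fin (kk * d)) = i := by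
    apply Fin.ext
    exact Nat.div_add_mod' _ _
  constructor
  · rintro ⟨-, hle⟩
    rw [h0, List.drop_zero, hHD] at hle
    by_cases hj : (j' : ℕ) = (i : ℕ) / kk
    · refine ⟨hj, ?_⟩
      rw [if_pos (by rw [hj])] at hle
      by_contra hx
      have hx' : x ⟨(j' : ℕ) * kk + ((i : ℕ) % kk), keyBound j' lF⟩ = false := by
        have : (⟨(j' : ℕ) * kk + ((i : ℕ) % kk), keyBound j' lF⟩ : Fin (kk * d)) = i := by
          apply Fin.ext; simp only [hj]; exact Nat.div_add_mod' _ _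
        rw [this]; simpa using hx
      rw [ha, hx'] at hle
      simp at hle
      omega
    · rw [if_neg (by omega)] at hle
      omega
  · rintro ⟨hj, hx⟩
    refine ⟨by omega, ?_⟩
    rw [h0, List.drop_zero, hHD, if_pos (by rw [hj])]
    have hx' : x ⟨(j' : ℕ) * kk + ((i : ℕ) % kk), keyBound j' lF⟩ = true := by
      have : (⟨(j' : ℕ) * kk + ((i : ℕ) % kk), keyBound j' lF⟩ : Fin (kk * d)) = i := by
        apply Fin.ext; simp only [hj]; exact Nat.div_add_mod' _ _
      rw [this, hx]
    rw [ha, hx']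
    simp
    omega

/-- Given the Ω(n) lower bound for Index, any randomized streaming algorithm
solving dictionary matching with `k` mismatches on `d` patterns correctly with
probability `> 2/3` must use `Ω(k·d)` bits of memory. -/
theorem stmt17 (hIndex : IndexLB) :
    ∃ c : ℝ, 0 < c ∧
      ∀ (kk d b : ℕ), 1 ≤ kk → 1 ≤ d →
        ∀ (R : Type) [Fintype R] [Nonempty R] (A : R → DetAlg d b),
          StreamCorrect kk d b R A → c * ((kk : ℝ) * (d : ℝ)) ≤ (b : ℝ) := by
  obtain ⟨c, hc, H⟩ := hIndex
  refine ⟨c, hc, ?_⟩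
  intro kk d b hkk hd R _ _ A hA
  have key' := fun (x : Fin (kk * d) → Bool) (i : Fin (kk * d)) (j' : Fin d) =>
    key hkk x i j'
  have hmain := H (kk * d) b R
      (fun x ρ => (A ρ).init (encPat x))
      (fun i m ρ => decide ((⟨(i : ℕ) / kk, Nat.div_lt_of_lt_mul i.isLt⟩ : Fin d) ∈
          (A ρ).out ((encText kk ((i : ℕ) / kk) ((i : ℕ) % kk)).foldl (A ρ).step m)))
      ?_
  · calc c * ((kk : ℝ) * (d : ℝ)) = c * ((kk * d : ℕ) : ℝ) := by push_cast; ring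
      _ ≤ b := hmain
  · intro x i
    set T := encText kk ((i : ℕ) / kk) ((i : ℕ) % kk) with hT
    set jF : Fin d := ⟨(i : ℕ) / kk, Nat.div_lt_of_lt_mul i.isLt⟩ with hjF
    have hA' := hA (encPat x) T
    refine lt_of_lt_of_le hA' ?_
    have hcardR : (0 : ℝ) < (Fintype.card R : ℝ) := by
      exact_mod_cast Fintype.card_pos
    have hsub : (Finset.univ.filter (fun ρ : R =>
        (A ρ).out (runAlg (A ρ) (encPat x) T) =
          Finset.univ.filter (fun jj => occursEnd kk (encPat x jj) T))) ⊆
        (Finset.univ.filter (fun ρ : R =>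
          decide (jF ∈ (A ρ).out (T.foldl (A ρ).step ((A ρ).init (encPat x)))) = x i)) := by
      intro ρ hρ
      rw [Finset.mem_filter] at hρ ⊢
      refine ⟨Finset.mem_univ _, ?_⟩
      have hout : (A ρ).out (T.foldl (A ρ).step ((A ρ).init (encPat x))) =
          Finset.univ.filter (fun jj => occursEnd kk (encPat x jj) T) := hρ.2
      rw [hout]
      have hmem : jF ∈ Finset.univ.filter (fun jj => occursEnd kk (encPat x jj) T) ↔
          (x i = true) := by
        rw [Finset.mem_filter]
        simp only [Finset.mem_univ, true_and]
        rw [hT, key' x i jF]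
        simp [hjF]
      cases hxi : x i
      · simp only [decide_eq_false_iff_not]
        rw [hmem, hxi]; simp
      · simp only [decide_eq_true_eq]
        rw [hmem]; exact hxi
    have hcard : ((Finset.univ.filter (fun ρ : R =>
        (A ρ).out (runAlg (A ρ) (encPat x) T) =
          Finset.univ.filter (fun jj => occursEnd kk (encPat x jj) T))).card : ℝ) ≤
        ((Finset.univ.filter (fun ρ : R =>
          decide (jF ∈ (A ρ).out (T.foldl (A ρ).step ((A ρ).init (encPat x)))) = x i)).card : ℝ) := by
      exact_mod_cast Finset.card_le_card hsub
    exact div_le_div_of_nonneg_right hcard hcardR.le
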